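/- Let h and k be coprime odd positive integers and let p ≥ 1 be an integer. Then k^p T_p(h, k) + h^p T_p(k, h) = (hk)^p T_p(1, hk) − 2 E_p − 2 (hk)^p Σ (−1)^{u+v−1} E_p(u/k + v/h), where the last sum runs over all pairs of integers (u, v) with 0 ≤ u ≤ k−1, 0 ≤ v ≤ h−1 and uh + vk < hk, E_p(x) is the p-th Euler polynomial, and E_p = E_p(0) the p-th Euler number. -/

import Mathlib

open Finset

/-- The Euler numbers `E_n`, defined by `E_0 = 1` and the recurrence
`∑_{l=0}^{n} C(n,l) E_l + E_n = 0` for `n ≥ 1`. -/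
def eulerNumber : ℕ → ℚ
  | 0 => 1
  | n + 1 => -(∑ l : Fin (n + 1), ((n + 1).choose l : ℚ) * eulerNumber l) / 2

/-- The Euler polynomials `E_n(x) = ∑_{l=0}^{n} C(n,l) E_l x^{n-l}`. -/
noncomputable def eulerPoly (n : ℕ) (x : ℝ) : ℝ :=
  ∑ l ∈ Finset.range (n + 1), (n.choose l : ℝ) * (eulerNumber l : ℝ) * x ^ (n - l)

/-- The Euler function `Ē_p(x) = (-1)^⌊x⌋ E_p(x - ⌊x⌋)`. -/
noncomputable def eulerFun (p : ℕ) (x : ℝ) : ℝ := (-1 : ℝ) ^ ⌊x⌋ * eulerPoly p (x - ⌊x⌋)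

/-- The Dedekind-type DC sum `T_p(h,k) = 2 ∑_{u=1}^{k-1} (-1)^{u-1} (u/k) Ē_p(hu/k)`. -/
noncomputable def dcSum (p h k : ℕ) : ℝ :=
  2 * ∑ u ∈ Finset.Ico 1 k, (-1 : ℝ) ^ (u - 1) * ((u : ℝ) / k) * eulerFun p (h * u / k)

lemma eulerNumber_rec (n : ℕ) (hn : 1 ≤ n) :
    (∑ l ∈ range (n + 1), (n.choose l : ℚ) * eulerNumber l) + eulerNumber n = 0 := by
  obtain ⟨m, rfl⟩ := Nat.exists_eq_add_of_le hn
  have hm : 1 + m = m + 1 := by omega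
  rw [hm]
  have hdef : eulerNumber (m + 1) =
      -(∑ l : Fin (m + 1), ((m + 1).choose l : ℚ) * eulerNumber l) / 2 := by
    rw [eulerNumber]
  rw [Fin.sum_univ_eq_sum_range (fun l => ((m + 1).choose l : ℚ) * eulerNumber l)] at hdef
  rw [Finset.sum_range_succ, Nat.choose_self, hdef]
  ring

lemma eulerNumber_rec' (n : ℕ) (hn : 1 ≤ n) :
    (∑ l ∈ range (n + 1), ((n.choose l : ℝ)) * (eulerNumber l : ℝ)) + (eulerNumber n : ℝ) = 0 := by
  have h := eulerNumber_rec n hn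
  have h2 : (((∑ l ∈ range (n + 1), (n.choose l : ℚ) * eulerNumber l) + eulerNumber n : ℚ) : ℝ)
      = 0 := by rw [h]; norm_num
  push_cast at h2
  exact h2

lemma eulerPoly_zero (x : ℝ) : eulerPoly 0 x = 1 := by
  simp [eulerPoly, eulerNumber]

lemma eulerPoly_at_zero (n : ℕ) : eulerPoly n 0 = (eulerNumber n : ℝ) := by
  rw [eulerPoly, Finset.sum_eq_single n]
  · simp
  · intro l hl hln
    rw [mem_range] at hl
    rw [zero_pow (by omega : n - l ≠ 0)]
    ring
  · simp

lemma eulerPoly_at_one (n : ℕ) :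
    eulerPoly n 1 = ∑ l ∈ range (n + 1), ((n.choose l : ℝ)) * (eulerNumber l : ℝ) := by
  simp [eulerPoly]

lemma choose_mul_sub (n l : ℕ) (hl : l ≤ n) :
    ((n + 1).choose l : ℝ) * ((n + 1 - l : ℕ) : ℝ) = ((n : ℝ) + 1) * (n.choose l : ℝ) := by
  have hnat : (n + 1).choose l * (n + 1 - l) = (n + 1) * n.choose l := by
    rw [← Nat.choose_mul_succ_eq n l]; ring
  exact_mod_cast hnat

lemma hasDerivAt_eulerPoly (n : ℕ) (x : ℝ) :
    HasDerivAt (eulerPoly (n + 1)) (((n : ℝ) + 1) * eulerPoly n x) x := by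
  have h : HasDerivAt (eulerPoly (n + 1))
      (∑ l ∈ range (n + 2), ((n + 1).choose l : ℝ) * (eulerNumber l : ℝ) *
        (((n + 1 - l : ℕ) : ℝ) * x ^ (n + 1 - l - 1))) x := by
    apply HasDerivAt.fun_sum
    intro l _
    exact (hasDerivAt_pow (n + 1 - l) x).const_mul _
  convert h using 1
  rw [Finset.sum_range_succ]
  have hlast : ((n + 1).choose (n + 1) : ℝ) * (eulerNumber (n + 1) : ℝ) *
      (((n + 1 - (n + 1) : ℕ) : ℝ) * x ^ (n + 1 - (n + 1) - 1)) = 0 := by simp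
  rw [hlast, add_zero, eulerPoly, Finset.mul_sum]
  apply Finset.sum_congr rfl
  intro l hl
  rw [mem_range] at hl
  have hidx : n + 1 - l - 1 = n - l := by omega
  rw [hidx]
  have hc := choose_mul_sub n l (by omega)
  linear_combination (-(eulerNumber l : ℝ) * x ^ (n - l)) * hc

lemma eulerPoly_add_one (n : ℕ) (x : ℝ) :
    eulerPoly n (x + 1) + eulerPoly n x = 2 * x ^ n := by
  induction n generalizing x with
  | zero => simp [eulerPoly_zero]; norm_num
  | succ n ih =>
    set f : ℝ → ℝ := fun y => eulerPoly (n + 1) (y + 1) + eulerPoly (n + 1) y - 2 * y ^ (n + 1)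
      with hf
    have hderiv : ∀ y, HasDerivAt f 0 y := by
      intro y
      have h1 : HasDerivAt (fun y : ℝ => eulerPoly (n + 1) (y + 1))
          (((n : ℝ) + 1) * eulerPoly n (y + 1)) y := by
        have := (hasDerivAt_eulerPoly n (y + 1)).comp y ((hasDerivAt_id y).add_const 1)
        simpa [Function.comp_def] using this
      have h2 := hasDerivAt_eulerPoly n y
      have h3 : HasDerivAt (fun y : ℝ => 2 * y ^ (n + 1)) (2 * (((n : ℝ) + 1) * y ^ n)) y := by
        have := (hasDerivAt_pow (n + 1) y).const_mul (2 : ℝ)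
        simpa using this
      have h4 := (h1.add h2).sub h3
      exact h4.congr_deriv (by linear_combination ((n : ℝ) + 1) * ih y)
    have hconst : ∀ y, f y = f 0 := fun y =>
      is_const_of_deriv_eq_zero (fun z => (hderiv z).differentiableAt)
        (fun z => (hderiv z).deriv) y 0
    have hf0 : f 0 = 0 := by
      have hrec := eulerNumber_rec' (n + 1) (by omega)
      simp only [hf, zero_add, eulerPoly_at_one, eulerPoly_at_zero]
      rw [zero_pow (by omega : n + 1 ≠ 0)]
      linarith
    have hx := hconst x
    rw [hf0] at hx
    simp only [hf] at hx
    linarith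

-- telescoping helper
lemma alt_telescope (m : ℕ) (hm : Odd m) (A : ℕ → ℝ) :
    (∑ j ∈ range m, (-1 : ℝ) ^ j * A (j + 1)) + ∑ j ∈ range m, (-1 : ℝ) ^ j * A j
      = A 0 + A m := by
  have h1 : ∑ j ∈ range m, (-1 : ℝ) ^ j * A (j + 1)
      = -∑ j ∈ range m, (-1 : ℝ) ^ (j + 1) * A (j + 1) := by
    rw [← Finset.sum_neg_distrib]
    apply Finset.sum_congr rfl; intro j _; ring
  have h2 : ∑ j ∈ range (m + 1), (-1 : ℝ) ^ j * A j
      = (∑ j ∈ range m, (-1 : ℝ) ^ (j + 1) * A (j + 1)) + (-1 : ℝ) ^ 0 * A 0 :=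
    Finset.sum_range_succ' (fun j => (-1 : ℝ) ^ j * A j) m
  have h3 : ∑ j ∈ range (m + 1), (-1 : ℝ) ^ j * A j
      = (∑ j ∈ range m, (-1 : ℝ) ^ j * A j) + (-1 : ℝ) ^ m * A m :=
    Finset.sum_range_succ _ m
  have hodd : (-1 : ℝ) ^ m = -1 := hm.neg_one_pow
  rw [hodd] at h3
  linarith [h1, h2, h3]

lemma eulerPoly_mul (m : ℕ) (hm : Odd m) (n : ℕ) (x : ℝ) :
    eulerPoly n x = (m : ℝ) ^ n * ∑ j ∈ range m, (-1 : ℝ) ^ j * eulerPoly n ((x + j) / m) := by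
  have hm1 : 1 ≤ m := hm.pos
  have hm0 : (m : ℝ) ≠ 0 := by positivity
  induction n generalizing x with
  | zero =>
    simp only [eulerPoly_zero, pow_zero, one_mul, mul_one]
    rw [neg_one_geom_sum, if_neg (Nat.not_even_iff_odd.mpr hm)]
  | succ n ih =>
    set g : ℝ → ℝ := fun y =>
      (m : ℝ) ^ (n + 1) * (∑ j ∈ range m, (-1 : ℝ) ^ j * eulerPoly (n + 1) ((y + j) / m))
        - eulerPoly (n + 1) y with hg
    have hderiv : ∀ y, HasDerivAt g 0 y := by
      intro y
      have hterm : ∀ j : ℕ, HasDerivAt (fun y : ℝ => eulerPoly (n + 1) ((y + j) / m))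
          (((n : ℝ) + 1) * eulerPoly n ((y + j) / m) * (1 / m)) y := by
        intro j
        have hin : HasDerivAt (fun y : ℝ => (y + j) / m) (1 / m) y := by
          have := ((hasDerivAt_id y).add_const (j : ℝ)).div_const (m : ℝ)
          simpa using this
        exact (hasDerivAt_eulerPoly n ((y + j) / m)).comp y hin
      have hsum : HasDerivAt
          (fun y : ℝ => (m : ℝ) ^ (n + 1) * ∑ j ∈ range m, (-1 : ℝ) ^ j * eulerPoly (n + 1) ((y + j) / m))
          ((m : ℝ) ^ (n + 1) * ∑ j ∈ range m,
            (-1 : ℝ) ^ j * (((n : ℝ) + 1) * eulerPoly n ((y + j) / m) * (1 / m))) y := by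
        apply HasDerivAt.const_mul
        apply HasDerivAt.fun_sum
        intro j _
        exact (hterm j).const_mul _
      have h4 := hsum.sub (hasDerivAt_eulerPoly n y)
      refine h4.congr_deriv ?_
      have hfac : ∀ j ∈ range m, (-1:ℝ)^j * (((n:ℝ)+1) * eulerPoly n ((y+j)/m) * (1/m))
          = (((n:ℝ)+1)/m) * ((-1:ℝ)^j * eulerPoly n ((y+j)/m)) := by
        intro j _; ring
      rw [Finset.sum_congr rfl hfac, ← Finset.mul_sum]
      have hstep : (m:ℝ)^(n+1) * ((((n:ℝ)+1)/m) * ∑ j ∈ range m, (-1:ℝ)^j * eulerPoly n ((y+j)/m))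
          = ((n:ℝ)+1) * ((m:ℝ)^n * ∑ j ∈ range m, (-1:ℝ)^j * eulerPoly n ((y+j)/m)) := by
        field_simp
        ring
      rw [hstep, ← ih y]
      ring
    have hconst : ∀ y, g y = g 0 := fun y =>
      is_const_of_deriv_eq_zero (fun z => (hderiv z).differentiableAt)
        (fun z => (hderiv z).deriv) y 0
    have hanti : ∀ y, g (y + 1) + g y = 0 := by
      intro y
      have htel := alt_telescope m hm (fun j => eulerPoly (n + 1) ((y + j) / m))
      have harg : ∀ j : ℕ, (y + 1 + (j : ℝ)) / m = (y + ((j : ℕ) + 1 : ℕ)) / m := by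
        intro j; push_cast; ring_nf
      have hsum1 : ∑ j ∈ range m, (-1 : ℝ) ^ j * eulerPoly (n + 1) ((y + 1 + j) / m)
          = ∑ j ∈ range m, (-1 : ℝ) ^ j * eulerPoly (n + 1) ((y + ((j : ℝ) + 1)) / m) := by
        apply Finset.sum_congr rfl; intro j _
        congr 2
        push_cast
        ring
      have hAm : (y + (m : ℝ)) / m = y / m + 1 := by field_simp
      have hA0 : (y + (0 : ℕ)) / m = y / m := by push_cast; ring_nf
      have hend : eulerPoly (n + 1) ((y + (0:ℕ)) / m) + eulerPoly (n + 1) ((y + (m:ℕ)) / m)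
          = 2 * (y / m) ^ (n + 1) := by
        rw [hA0]
        have : ((y + (m:ℕ)) / m : ℝ) = y / m + 1 := by push_cast; field_simp
        rw [this]
        have := eulerPoly_add_one (n + 1) (y / m)
        linarith
      -- combine
      have key : (∑ j ∈ range m, (-1 : ℝ) ^ j * eulerPoly (n + 1) ((y + 1 + j) / m))
          + ∑ j ∈ range m, (-1 : ℝ) ^ j * eulerPoly (n + 1) ((y + j) / m)
          = 2 * (y / m) ^ (n + 1) := by
        rw [hsum1]
        have : ∀ j ∈ range m, (-1:ℝ)^j * eulerPoly (n + 1) ((y + ((j:ℝ) + 1)) / m)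
            = (-1:ℝ)^j * eulerPoly (n + 1) ((y + ((j + 1 : ℕ) : ℝ)) / m) := by
          intro j _; push_cast; ring_nf
        rw [Finset.sum_congr rfl this, htel]
        exact hend
      simp only [hg]
      have hpow : ((m:ℝ)) ^ (n+1) * (2 * (y / m) ^ (n + 1)) = 2 * y ^ (n+1) := by
        field_simp
        rw [← mul_pow]; congr 1; field_simp
      have heu := eulerPoly_add_one (n + 1) y
      calc ((m:ℝ) ^ (n + 1) * (∑ j ∈ range m, (-1 : ℝ) ^ j * eulerPoly (n + 1) ((y + 1 + j) / m))
            - eulerPoly (n + 1) (y + 1))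
          + ((m:ℝ) ^ (n + 1) * (∑ j ∈ range m, (-1 : ℝ) ^ j * eulerPoly (n + 1) ((y + j) / m))
            - eulerPoly (n + 1) y)
          = (m:ℝ) ^ (n + 1) * ((∑ j ∈ range m, (-1 : ℝ) ^ j * eulerPoly (n + 1) ((y + 1 + j) / m))
              + ∑ j ∈ range m, (-1 : ℝ) ^ j * eulerPoly (n + 1) ((y + j) / m))
            - (eulerPoly (n + 1) (y + 1) + eulerPoly (n + 1) y) := by ring
        _ = 0 := by rw [key, heu, hpow]; ring
    have h0 : g 0 = 0 := by
      have h00 := hanti 0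
      have h01 : (0:ℝ) + 1 = 1 := by norm_num
      rw [h01, hconst 1] at h00
      linarith
    have := hconst x
    rw [h0] at this
    simp only [hg] at this
    linarith

lemma neg_one_pow_congr' (a b : ℕ) (hab : a % 2 = b % 2) : (-1 : ℝ) ^ a = (-1 : ℝ) ^ b := by
  conv_lhs => rw [← Nat.div_add_mod a 2]
  conv_rhs => rw [← Nat.div_add_mod b 2]
  rw [pow_add, pow_add, pow_mul, pow_mul, hab]
  norm_num

lemma eulerFun_of_Ico (p : ℕ) (x : ℝ) (h0 : 0 ≤ x) (h1 : x < 1) :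
    eulerFun p x = eulerPoly p x := by
  have : ⌊x⌋ = 0 := Int.floor_eq_zero_iff.mpr ⟨h0, h1⟩
  simp [eulerFun, this]

lemma eulerFun_add_one (p : ℕ) (x : ℝ) : eulerFun p (x + 1) = -eulerFun p x := by
  have hfl : ⌊x + 1⌋ = ⌊x⌋ + 1 := by
    rw [Int.floor_add_one]
  rw [eulerFun, eulerFun, hfl]
  have : (-1 : ℝ) ^ (⌊x⌋ + 1) = -(-1 : ℝ) ^ ⌊x⌋ := by
    rw [zpow_add_one₀ (by norm_num : (-1:ℝ) ≠ 0)]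
    ring
  rw [this]
  have harg : x + 1 - (↑(⌊x⌋ + 1)) = x - ⌊x⌋ := by push_cast; ring
  rw [harg]
  ring

lemma eulerFun_add_nat (p : ℕ) (x : ℝ) (n : ℕ) :
    eulerFun p (x + n) = (-1 : ℝ) ^ n * eulerFun p x := by
  induction n with
  | zero => simp
  | succ n ih =>
    have : x + ((n : ℝ) + 1) = (x + n) + 1 := by ring
    push_cast
    rw [this, eulerFun_add_one, ih]
    ring

-- the alternating sum S and its shift property
lemma sum_shift (p m : ℕ) (hm : Odd m) (x : ℝ) (q : ℕ) :
    ∑ j ∈ range m, (-1 : ℝ) ^ j * eulerFun p (x + (q : ℝ) / m + j / m)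
      = (-1 : ℝ) ^ q * ∑ j ∈ range m, (-1 : ℝ) ^ j * eulerFun p (x + j / m) := by
  have hm1 : 1 ≤ m := hm.pos
  have hm0 : (m : ℝ) ≠ 0 := by positivity
  induction q generalizing x with
  | zero => simp
  | succ q ih =>
    -- step: S (x + 1/m) = - S x
    have hstep : ∀ y : ℝ, ∑ j ∈ range m, (-1 : ℝ) ^ j * eulerFun p (y + 1 / m + j / m)
        = -∑ j ∈ range m, (-1 : ℝ) ^ j * eulerFun p (y + j / m) := by
      intro y
      have h1 : ∀ j ∈ range m, (-1 : ℝ) ^ j * eulerFun p (y + 1 / m + (j : ℝ) / m)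
          = (-1 : ℝ) ^ j * eulerFun p (y + ((j + 1 : ℕ) : ℝ) / m) := by
        intro j _
        congr 2
        push_cast
        ring
      rw [Finset.sum_congr rfl h1]
      -- telescoping
      have h2 : ∑ j ∈ range (m + 1), (-1 : ℝ) ^ j * eulerFun p (y + (j:ℝ) / m)
          = (∑ j ∈ range m, (-1 : ℝ) ^ (j+1) * eulerFun p (y + ((j + 1 : ℕ):ℝ) / m))
            + (-1 : ℝ) ^ 0 * eulerFun p (y + ((0:ℕ):ℝ) / m) := by
        exact Finset.sum_range_succ' (fun j => (-1 : ℝ) ^ j * eulerFun p (y + (j:ℝ) / m)) m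
      have h3 : ∑ j ∈ range (m + 1), (-1 : ℝ) ^ j * eulerFun p (y + (j:ℝ) / m)
          = (∑ j ∈ range m, (-1 : ℝ) ^ j * eulerFun p (y + (j:ℝ) / m))
            + (-1 : ℝ) ^ m * eulerFun p (y + (m:ℝ) / m) := Finset.sum_range_succ _ m
      have hm' : (-1 : ℝ) ^ m = -1 := hm.neg_one_pow
      have hlast : eulerFun p (y + (m:ℝ) / m) = -eulerFun p y := by
        rw [div_self hm0, eulerFun_add_one]
      have h0' : eulerFun p (y + ((0:ℕ):ℝ) / m) = eulerFun p y := by norm_num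
      have hneg : ∑ j ∈ range m, (-1 : ℝ) ^ j * eulerFun p (y + ((j + 1 : ℕ):ℝ) / m)
          = -∑ j ∈ range m, (-1 : ℝ) ^ (j+1) * eulerFun p (y + ((j + 1 : ℕ):ℝ) / m) := by
        rw [← Finset.sum_neg_distrib]
        apply Finset.sum_congr rfl
        intro j _; ring
      rw [hm', hlast] at h3
      rw [h0'] at h2
      linarith [h2, h3, hneg]
    have harg : ∀ j : ℕ, x + ((q + 1 : ℕ) : ℝ) / m + (j:ℝ) / m
        = (x + (q:ℝ)/m) + 1/m + (j:ℝ)/m := by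
      intro j; push_cast; ring
    have : ∀ j ∈ range m, (-1 : ℝ) ^ j * eulerFun p (x + ((q + 1 : ℕ) : ℝ) / m + (j:ℝ) / m)
        = (-1 : ℝ) ^ j * eulerFun p ((x + (q:ℝ)/m) + 1/m + (j:ℝ)/m) := by
      intro j _; rw [harg j]
    rw [Finset.sum_congr rfl this, hstep (x + (q:ℝ)/m)]
    have hih : ∀ j ∈ range m, (-1:ℝ)^j * eulerFun p ((x + (q:ℝ)/m) + (j:ℝ)/m)
        = (-1:ℝ)^j * eulerFun p (x + (q:ℝ)/m + (j:ℝ)/m) := by intro j _; ring_nf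
    rw [Finset.sum_congr rfl hih, ih x]
    push_cast
    ring

lemma eulerFun_mul (p m : ℕ) (hm : Odd m) (t : ℝ) (h0 : 0 ≤ t) (h1 : t < 1) :
    eulerFun p ((m : ℝ) * t) = (m : ℝ) ^ p * ∑ j ∈ range m, (-1 : ℝ) ^ j * eulerFun p (t + j / m) := by
  have hm1 : 1 ≤ m := hm.pos
  have hm0 : (m : ℝ) ≠ 0 := by positivity
  have hmpos : (0:ℝ) < m := by positivity
  set q : ℕ := (⌊(m : ℝ) * t⌋).toNat with hq
  have hfl : (⌊(m : ℝ) * t⌋ : ℤ) = (q : ℤ) := by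
    rw [hq, Int.toNat_of_nonneg]
    exact Int.floor_nonneg.mpr (by positivity)
  set s : ℝ := (m : ℝ) * t - q with hs
  have hs0 : 0 ≤ s := by
    rw [hs]
    have hfloor := Int.floor_le ((m:ℝ)*t)
    rw [hfl] at hfloor
    push_cast at hfloor
    linarith
  have hs1 : s < 1 := by
    have := Int.lt_floor_add_one ((m:ℝ)*t)
    rw [hfl] at this
    push_cast at this
    rw [hs]; linarith
  have hmt : (m : ℝ) * t = s + q := by rw [hs]; ring
  have hL : eulerFun p ((m:ℝ) * t) = (-1:ℝ)^q * eulerPoly p s := by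
    rw [hmt, eulerFun_add_nat, eulerFun_of_Ico p s hs0 hs1]
  have ht : ∀ j : ℕ, t + (j:ℝ)/m = s/m + (q:ℝ)/m + (j:ℝ)/m := by
    intro j
    field_simp
    linarith [hmt]
  have hsum : ∑ j ∈ range m, (-1:ℝ)^j * eulerFun p (t + (j:ℝ)/m)
      = (-1:ℝ)^q * ∑ j ∈ range m, (-1:ℝ)^j * eulerFun p (s/m + (j:ℝ)/m) := by
    rw [← sum_shift p m hm (s/m) q]
    apply Finset.sum_congr rfl
    intro j _
    rw [ht j]
  have hin : ∀ j ∈ range m, (-1:ℝ)^j * eulerFun p (s/m + (j:ℝ)/m)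
      = (-1:ℝ)^j * eulerPoly p ((s + j)/m) := by
    intro j hj
    rw [mem_range] at hj
    have harg : s/m + (j:ℝ)/m = (s + j)/m := by ring
    rw [harg, eulerFun_of_Ico]
    · positivity
    · rw [div_lt_one hmpos]
      have : (j : ℝ) ≤ (m : ℝ) - 1 := by
        have : (j : ℝ) + 1 ≤ m := by exact_mod_cast hj
        linarith
      linarith
  have hpm := eulerPoly_mul m hm p s
  rw [hL, hsum, Finset.sum_congr rfl hin, ← mul_assoc]
  rw [mul_comm ((m:ℝ)^p) ((-1:ℝ)^q), mul_assoc, ← hpm]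

lemma sum_mod_bij (p h k : ℕ) (hh : 0 < h) (hhodd : Odd h) (hkodd : Odd k)
    (hcop : Nat.Coprime k h) :
    ∑ v ∈ range h, (-1 : ℝ) ^ v * eulerFun p ((k : ℝ) * v / h)
      = ∑ r ∈ range h, (-1 : ℝ) ^ r * eulerFun p ((r : ℝ) / h) := by
  apply Finset.sum_bij (fun v _ => (k * v) % h)
  · intro v hv
    exact mem_range.mpr (Nat.mod_lt _ hh)
  · intro v1 hv1 v2 hv2 heq
    rw [mem_range] at hv1 hv2
    have : v1 % h = v2 % h := by
      have hmod : k * v1 ≡ k * v2 [MOD h] := heq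
      exact Nat.ModEq.cancel_left_of_coprime hcop.symm hmod
    rwa [Nat.mod_eq_of_lt hv1, Nat.mod_eq_of_lt hv2] at this
  · intro b hb
    obtain ⟨a, ha, hba⟩ := Finset.surj_on_of_inj_on_of_card_le
      (fun v (_ : v ∈ range h) => (k * v) % h)
      (fun v hv => mem_range.mpr (Nat.mod_lt _ hh))
      (fun v1 v2 hv1 hv2 heq => by
        rw [mem_range] at hv1 hv2
        have hmod : k * v1 ≡ k * v2 [MOD h] := heq
        have := Nat.ModEq.cancel_left_of_coprime hcop.symm hmod
        rwa [Nat.ModEq, Nat.mod_eq_of_lt hv1, Nat.mod_eq_of_lt hv2] at this)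
      (by simp) b hb
    exact ⟨a, ha, hba.symm⟩
  · intro v hv
    have hdm : h * (k * v / h) + (k * v) % h = k * v := Nat.div_add_mod (k * v) h
    set d := k * v / h with hd
    set r := (k * v) % h with hr
    have harg : (k : ℝ) * v / h = (r : ℝ) / h + d := by
      have : ((k * v : ℕ) : ℝ) = (h : ℝ) * d + r := by exact_mod_cast hdm.symm
      push_cast at this ⊢
      field_simp
      linarith
    rw [harg, eulerFun_add_nat]
    have hsign : (-1 : ℝ) ^ v * (-1 : ℝ) ^ d = (-1 : ℝ) ^ r := by
      rw [← pow_add]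
      apply neg_one_pow_congr'
      have h1 : (k * v) % 2 = v % 2 := by
        rw [Nat.mul_mod, Nat.odd_iff.mp hkodd, one_mul, Nat.mod_mod_of_dvd v (dvd_refl 2)]
      have h2 : (h * d) % 2 = d % 2 := by
        rw [Nat.mul_mod, Nat.odd_iff.mp hhodd, one_mul, Nat.mod_mod_of_dvd d (dvd_refl 2)]
      set a := k * v
      set b := h * d
      omega
    calc (-1 : ℝ) ^ v * ((-1 : ℝ) ^ d * eulerFun p ((r : ℝ) / h))
        = ((-1 : ℝ) ^ v * (-1 : ℝ) ^ d) * eulerFun p ((r : ℝ) / h) := by ring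
      _ = (-1 : ℝ) ^ r * eulerFun p ((r : ℝ) / h) := by rw [hsign]

lemma sum_G_eulerFun (p h k : ℕ) (hh : 0 < h) (hk : 0 < k) (hhodd : Odd h) (hkodd : Odd k)
    (hcop : Nat.Coprime h k) :
    ∑ uv ∈ range k ×ˢ range h, (-1 : ℝ) ^ (uv.1 + uv.2) * eulerFun p ((uv.1 : ℝ) / k + (uv.2 : ℝ) / h)
      = (eulerNumber p : ℝ) / ((h : ℝ) ^ p * (k : ℝ) ^ p) := by
  have hkR : (0:ℝ) < k := by positivity
  have hhR : (0:ℝ) < h := by positivity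
  rw [Finset.sum_product]
  rw [Finset.sum_comm]
  have hinner : ∀ v ∈ range h, ∑ u ∈ range k,
      (-1 : ℝ) ^ (u + v) * eulerFun p ((u : ℝ) / k + (v : ℝ) / h)
      = (-1 : ℝ) ^ v * eulerFun p ((k : ℝ) * ((v : ℝ) / h)) / (k : ℝ) ^ p := by
    intro v hv
    rw [mem_range] at hv
    have ht0 : (0:ℝ) ≤ (v : ℝ) / h := by positivity
    have ht1 : (v : ℝ) / h < 1 := by
      rw [div_lt_one hhR]; exact_mod_cast hv
    have := eulerFun_mul p k hkodd ((v : ℝ) / h) ht0 ht1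
    have hkp : ((k:ℝ)) ^ p ≠ 0 := by positivity
    rw [this]
    have hcancel : (-1:ℝ)^v * ((k:ℝ)^p * ∑ j ∈ range k, (-1:ℝ)^j * eulerFun p ((v:ℝ)/h + (j:ℝ)/k)) / (k:ℝ)^p
        = (-1:ℝ)^v * ∑ j ∈ range k, (-1:ℝ)^j * eulerFun p ((v:ℝ)/h + (j:ℝ)/k) := by
      rw [mul_comm ((k:ℝ)^p), ← mul_assoc, mul_div_assoc, div_self hkp, mul_one]
    rw [hcancel, Finset.mul_sum]
    apply Finset.sum_congr rfl
    intro u _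
    rw [pow_add, add_comm ((u:ℝ)/k) ((v:ℝ)/h)]
    ring
  rw [Finset.sum_congr rfl hinner]
  have hstep : ∀ v ∈ range h, (-1:ℝ)^v * eulerFun p ((k : ℝ) * ((v : ℝ) / h)) / (k : ℝ) ^ p
      = ((-1:ℝ)^v * eulerFun p ((k : ℝ) * v / h)) / (k : ℝ) ^ p := by
    intro v _; rw [mul_div_assoc ((k:ℝ)) ((v:ℝ)) ((h:ℝ))]
  rw [Finset.sum_congr rfl hstep, ← Finset.sum_div]
  rw [sum_mod_bij p h k hh hhodd hkodd (Nat.Coprime.symm hcop)]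
  have h0 := eulerFun_mul p h hhodd 0 le_rfl one_pos
  rw [mul_zero] at h0
  have hE0 : eulerFun p 0 = (eulerNumber p : ℝ) := by
    rw [eulerFun_of_Ico p 0 le_rfl one_pos, eulerPoly_at_zero]
  have hsimp : ∀ r ∈ range h, (-1:ℝ)^r * eulerFun p (0 + (r:ℝ)/h)
      = (-1:ℝ)^r * eulerFun p ((r:ℝ)/h) := by
    intro r _; rw [zero_add]
  rw [Finset.sum_congr rfl hsimp] at h0
  rw [hE0] at h0
  have hhp : ((h:ℝ)) ^ p ≠ 0 := by positivity
  have hS : ∑ r ∈ range h, (-1:ℝ)^r * eulerFun p ((r:ℝ)/h) = (eulerNumber p : ℝ) / (h:ℝ)^p := by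
    rw [h0]; field_simp
  rw [hS, div_div]

lemma sum_crt (h k : ℕ) (hh : 0 < h) (hk : 0 < k) (hcop : Nat.Coprime h k) (g : ℕ → ℝ) :
    ∑ uv ∈ range k ×ˢ range h, g ((uv.1 * h + uv.2 * k) % (h * k))
      = ∑ m ∈ range (h * k), g m := by
  have hinj : ∀ a1 ∈ range k ×ˢ range h, ∀ a2 ∈ range k ×ˢ range h,
      (a1.1 * h + a1.2 * k) % (h * k) = (a2.1 * h + a2.2 * k) % (h * k) → a1 = a2 := by
    intro a1 ha1 a2 ha2 heq
    rw [Finset.mem_product, mem_range, mem_range] at ha1 ha2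
    have hdk : k ∣ h * k := ⟨h, mul_comm h k⟩
    have hdh : h ∣ h * k := ⟨k, rfl⟩
    have hu : a1.1 = a2.1 := by
      have h1 := congrArg (· % k) heq
      rw [Nat.mod_mod_of_dvd _ hdk, Nat.mod_mod_of_dvd _ hdk,
        Nat.add_mul_mod_self_right, Nat.add_mul_mod_self_right] at h1
      have hmod : h * a1.1 ≡ h * a2.1 [MOD k] := by
        rw [Nat.ModEq, Nat.mul_comm h a1.1, Nat.mul_comm h a2.1]
        exact h1
      have := Nat.ModEq.cancel_left_of_coprime hcop.symm hmod
      rwa [Nat.ModEq, Nat.mod_eq_of_lt ha1.1, Nat.mod_eq_of_lt ha2.1] at this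
    have hv : a1.2 = a2.2 := by
      have h1 := congrArg (· % h) heq
      rw [Nat.mod_mod_of_dvd _ hdh, Nat.mod_mod_of_dvd _ hdh,
        Nat.mul_comm a1.1 h, Nat.mul_comm a2.1 h, Nat.mul_add_mod, Nat.mul_add_mod] at h1
      have hmod : k * a1.2 ≡ k * a2.2 [MOD h] := by
        rw [Nat.ModEq, Nat.mul_comm k a1.2, Nat.mul_comm k a2.2]
        exact h1
      have := Nat.ModEq.cancel_left_of_coprime hcop hmod
      rwa [Nat.ModEq, Nat.mod_eq_of_lt ha1.2, Nat.mod_eq_of_lt ha2.2] at this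
    exact Prod.ext hu hv
  apply Finset.sum_bij (fun uv (_ : uv ∈ range k ×ˢ range h) => (uv.1 * h + uv.2 * k) % (h * k))
  · intro uv _
    exact mem_range.mpr (Nat.mod_lt _ (Nat.mul_pos hh hk))
  · exact hinj
  · intro b hb
    obtain ⟨a, ha, hba⟩ := Finset.surj_on_of_inj_on_of_card_le
      (fun uv (_ : uv ∈ range k ×ˢ range h) => (uv.1 * h + uv.2 * k) % (h * k))
      (fun uv _ => mem_range.mpr (Nat.mod_lt _ (Nat.mul_pos hh hk)))
      (fun a1 a2 h1 h2 he => hinj a1 h1 a2 h2 he)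
      (by rw [Finset.card_product, Finset.card_range, Finset.card_range, Finset.card_range,
        Nat.mul_comm]) b hb
    exact ⟨a, ha, hba.symm⟩
  · intro uv _
    rfl

/-- For coprime odd positive `h, k` and `p ≥ 1`,
`k^p T_p(h,k) + h^p T_p(k,h) = (hk)^p T_p(1, hk) − 2 E_p
  − 2 (hk)^p ∑_{(u,v) : 0 ≤ u ≤ k−1, 0 ≤ v ≤ h−1, uh+vk < hk} (−1)^{u+v−1} E_p(u/k + v/h)`. -/
theorem dcSum_reciprocity_aux2 (h k p : ℕ) (hh : 0 < h) (hk : 0 < k)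
    (hhodd : Odd h) (hkodd : Odd k) (hcop : Nat.Coprime h k) (hp : 1 ≤ p) :
    (k : ℝ) ^ p * dcSum p h k + (h : ℝ) ^ p * dcSum p k h =
      ((h : ℝ) * k) ^ p * dcSum p 1 (h * k) - 2 * (eulerNumber p : ℝ) -
        2 * ((h : ℝ) * k) ^ p *
          ∑ uv ∈ (Finset.range k ×ˢ Finset.range h).filter
              (fun uv => uv.1 * h + uv.2 * k < h * k),
            (-1 : ℝ) ^ (uv.1 + uv.2 + 1) *
              eulerPoly p ((uv.1 : ℝ) / k + (uv.2 : ℝ) / h) := by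
  have hkR : (0:ℝ) < (k:ℝ) := by exact_mod_cast hk
  have hhR : (0:ℝ) < (h:ℝ) := by exact_mod_cast hh
  have hhkR : (0:ℝ) < (h:ℝ) * k := by positivity
  set G := range k ×ˢ range h with hG
  -- abbreviations
  set x : ℕ × ℕ → ℝ := fun uv => (uv.1 : ℝ) / k + (uv.2 : ℝ) / h with hx
  -- Step A : k^p * dcSum p h k
  have stepA : (k : ℝ) ^ p * dcSum p h k
      = 2 * ((h:ℝ) * k) ^ p * ∑ uv ∈ G, (-1:ℝ) ^ (uv.1 + uv.2 + 1) * ((uv.1 : ℝ)/k) * eulerFun p (x uv) := by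
    rw [dcSum]
    have hterm : ∀ u ∈ Ico 1 k, (-1 : ℝ) ^ (u - 1) * ((u : ℝ) / k) * eulerFun p ((h:ℝ) * u / k)
        = ∑ j ∈ range h, (-1:ℝ) ^ (u + j + 1) * ((u:ℝ)/k) * ((h:ℝ)^p * eulerFun p ((u:ℝ)/k + (j:ℝ)/h)) := by
      intro u hu
      rw [Finset.mem_Ico] at hu
      have ht0 : (0:ℝ) ≤ (u:ℝ)/k := by positivity
      have ht1 : (u:ℝ)/k < 1 := by
        rw [div_lt_one hkR]; exact_mod_cast hu.2
      have hmul := eulerFun_mul p h hhodd ((u:ℝ)/k) ht0 ht1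
      rw [mul_div_assoc, hmul]
      have hsign : (-1:ℝ) ^ (u - 1) = (-1:ℝ) ^ (u + 1) := by
        apply neg_one_pow_congr'; omega
      rw [hsign, Finset.mul_sum, Finset.mul_sum]
      apply Finset.sum_congr rfl
      intro j _
      rw [pow_add, pow_add, pow_add]
      ring
    rw [Finset.sum_congr rfl hterm]
    have hext : ∑ u ∈ Ico 1 k, ∑ j ∈ range h,
          (-1:ℝ) ^ (u + j + 1) * ((u:ℝ)/k) * ((h:ℝ)^p * eulerFun p ((u:ℝ)/k + (j:ℝ)/h))
        = ∑ u ∈ range k, ∑ j ∈ range h,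
          (-1:ℝ) ^ (u + j + 1) * ((u:ℝ)/k) * ((h:ℝ)^p * eulerFun p ((u:ℝ)/k + (j:ℝ)/h)) := by
      rw [Finset.range_eq_Ico (a := k), Finset.sum_eq_sum_Ico_succ_bot hk]
      simp
    rw [hext, hG, Finset.sum_product]
    rw [mul_left_comm ((k:ℝ)^p) 2, mul_assoc 2 (((h:ℝ)*k)^p)]
    congr 1
    rw [Finset.mul_sum, Finset.mul_sum]
    apply Finset.sum_congr rfl
    intro u _
    rw [Finset.mul_sum, Finset.mul_sum]
    apply Finset.sum_congr rfl
    intro j _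
    simp only [hx]
    rw [mul_pow]
    ring
  -- Step B : h^p * dcSum p k h
  have stepB : (h : ℝ) ^ p * dcSum p k h
      = 2 * ((h:ℝ) * k) ^ p * ∑ uv ∈ G, (-1:ℝ) ^ (uv.1 + uv.2 + 1) * ((uv.2 : ℝ)/h) * eulerFun p (x uv) := by
    rw [dcSum]
    have hterm : ∀ v ∈ Ico 1 h, (-1 : ℝ) ^ (v - 1) * ((v : ℝ) / h) * eulerFun p ((k:ℝ) * v / h)
        = ∑ u ∈ range k, (-1:ℝ) ^ (u + v + 1) * ((v:ℝ)/h) * ((k:ℝ)^p * eulerFun p ((u:ℝ)/k + (v:ℝ)/h)) := by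
      intro v hv
      rw [Finset.mem_Ico] at hv
      have ht0 : (0:ℝ) ≤ (v:ℝ)/h := by positivity
      have ht1 : (v:ℝ)/h < 1 := by
        rw [div_lt_one hhR]; exact_mod_cast hv.2
      have hmul := eulerFun_mul p k hkodd ((v:ℝ)/h) ht0 ht1
      rw [mul_div_assoc, hmul]
      have hsign : (-1:ℝ) ^ (v - 1) = (-1:ℝ) ^ (v + 1) := by
        apply neg_one_pow_congr'; omega
      rw [hsign, Finset.mul_sum, Finset.mul_sum]
      apply Finset.sum_congr rfl
      intro u _
      rw [pow_add, pow_add, pow_add]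
      rw [add_comm ((v:ℝ)/h) ((u:ℝ)/k)]
      ring
    rw [Finset.sum_congr rfl hterm]
    have hext : ∑ v ∈ Ico 1 h, ∑ u ∈ range k,
          (-1:ℝ) ^ (u + v + 1) * ((v:ℝ)/h) * ((k:ℝ)^p * eulerFun p ((u:ℝ)/k + (v:ℝ)/h))
        = ∑ v ∈ range h, ∑ u ∈ range k,
          (-1:ℝ) ^ (u + v + 1) * ((v:ℝ)/h) * ((k:ℝ)^p * eulerFun p ((u:ℝ)/k + (v:ℝ)/h)) := by
      rw [Finset.range_eq_Ico (a := h), Finset.sum_eq_sum_Ico_succ_bot hh]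
      simp
    rw [hext, Finset.sum_comm, hG, Finset.sum_product]
    rw [mul_left_comm ((h:ℝ)^p) 2, mul_assoc 2 (((h:ℝ)*k)^p)]
    congr 1
    rw [Finset.mul_sum, Finset.mul_sum]
    apply Finset.sum_congr rfl
    intro u _
    rw [Finset.mul_sum, Finset.mul_sum]
    apply Finset.sum_congr rfl
    intro v _
    simp only [hx]
    rw [mul_pow]
    ring
  simp only [hx] at stepA stepB
  -- Step C : combine LHS
  have stepC : (k : ℝ) ^ p * dcSum p h k + (h : ℝ) ^ p * dcSum p k h
      = 2 * ((h:ℝ) * k) ^ p * ∑ uv ∈ G, (-1:ℝ) ^ (uv.1 + uv.2 + 1) *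
          ((uv.1 : ℝ)/k + (uv.2 : ℝ)/h) * eulerFun p ((uv.1 : ℝ)/k + (uv.2 : ℝ)/h) := by
    rw [stepA, stepB, ← mul_add, ← Finset.sum_add_distrib]
    congr 1
    apply Finset.sum_congr rfl
    intro uv _
    ring
  -- the function g on residues
  set g : ℕ → ℝ := fun m => (-1:ℝ)^(m+1) * ((m:ℝ)/((h:ℝ)*k)) * eulerPoly p ((m:ℝ)/((h:ℝ)*k))
    with hg
  -- Step D : RHS main term
  have stepD0 : ((h:ℝ) * k) ^ p * dcSum p 1 (h * k)
      = 2 * ((h:ℝ) * k) ^ p * ∑ uv ∈ G, g ((uv.1 * h + uv.2 * k) % (h * k)) := by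
    rw [dcSum]
    have h1 : ∀ m ∈ Ico 1 (h*k),
        (-1:ℝ)^(m-1) * ((m:ℝ)/((h*k : ℕ):ℝ)) * eulerFun p (((1:ℕ):ℝ) * m / ((h*k : ℕ):ℝ))
        = g m := by
      intro m hm
      rw [Finset.mem_Ico] at hm
      have hsign : (-1:ℝ)^(m-1) = (-1:ℝ)^(m+1) := by
        apply neg_one_pow_congr'; omega
      have hcast : ((h*k : ℕ):ℝ) = (h:ℝ)*k := by push_cast; ring
      have harg : ((1:ℕ):ℝ) * m / ((h:ℝ)*k) = (m:ℝ)/((h:ℝ)*k) := by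
        push_cast; ring
      have hmem0 : (0:ℝ) ≤ (m:ℝ)/((h:ℝ)*k) := by positivity
      have hmem1 : (m:ℝ)/((h:ℝ)*k) < 1 := by
        rw [div_lt_one hhkR]
        have : (m:ℝ) < ((h*k : ℕ):ℝ) := by exact_mod_cast hm.2
        rw [hcast] at this; exact this
      rw [hsign, hcast, harg, eulerFun_of_Ico p _ hmem0 hmem1, hg]
      
    rw [Finset.sum_congr rfl h1]
    have hext : ∑ m ∈ Ico 1 (h*k), g m = ∑ m ∈ range (h*k), g m := by
      rw [Finset.range_eq_Ico, Finset.sum_eq_sum_Ico_succ_bot (Nat.mul_pos hh hk)]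
      have : g 0 = 0 := by simp [hg]
      rw [this, zero_add]
    rw [hext, ← sum_crt h k hh hk hcop g, hG]
    ring
  -- pointwise evaluation of g on the CRT images
  have hpar_uh : ∀ u : ℕ, (u*h) % 2 = u % 2 := by
    intro u
    rw [Nat.mul_mod, Nat.odd_iff.mp hhodd, mul_one, Nat.mod_mod_of_dvd u (dvd_refl 2)]
  have hpar_vk : ∀ v : ℕ, (v*k) % 2 = v % 2 := by
    intro v
    rw [Nat.mul_mod, Nat.odd_iff.mp hkodd, mul_one, Nat.mod_mod_of_dvd v (dvd_refl 2)]
  have hpar_hk : (h*k) % 2 = 1 := Nat.odd_iff.mp (hhodd.mul hkodd)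
  have hgphi : ∀ uv ∈ G, g ((uv.1 * h + uv.2 * k) % (h * k))
      = if uv.1 * h + uv.2 * k < h * k then
          (-1:ℝ)^(uv.1+uv.2+1) * ((uv.1:ℝ)/k + (uv.2:ℝ)/h) * eulerPoly p ((uv.1:ℝ)/k + (uv.2:ℝ)/h)
        else
          (-1:ℝ)^(uv.1+uv.2) * ((uv.1:ℝ)/k + (uv.2:ℝ)/h - 1) * eulerPoly p ((uv.1:ℝ)/k + (uv.2:ℝ)/h - 1) := by
    intro uv huv
    rw [hG, Finset.mem_product, mem_range, mem_range] at huv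
    obtain ⟨hu, hv⟩ := huv
    have hb1 : uv.1*h + h ≤ k*h := by
      have : (uv.1+1)*h ≤ k*h := Nat.mul_le_mul_right h hu
      linarith [this]
    have hb2 : uv.2*k + k ≤ h*k := by
      have : (uv.2+1)*k ≤ h*k := Nat.mul_le_mul_right k hv
      linarith [this]
    have hcomm : k*h = h*k := Nat.mul_comm k h
    have hxval : (uv.1:ℝ)/k + (uv.2:ℝ)/h = ((uv.1:ℝ)*h + (uv.2:ℝ)*k)/((h:ℝ)*k) := by
      rw [div_add_div _ _ (ne_of_gt hkR) (ne_of_gt hhR),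
        div_eq_div_iff (by positivity) (by positivity)]
      ring
    by_cases hcase : uv.1 * h + uv.2 * k < h * k
    · rw [if_pos hcase]
      have hmod : (uv.1 * h + uv.2 * k) % (h * k) = uv.1 * h + uv.2 * k :=
        Nat.mod_eq_of_lt hcase
      rw [hmod, hg]
      have harg : ((uv.1 * h + uv.2 * k : ℕ):ℝ)/((h:ℝ)*k) = (uv.1:ℝ)/k + (uv.2:ℝ)/h := by
        rw [hxval]; push_cast; ring
      have hsgn : (-1:ℝ)^(uv.1 * h + uv.2 * k + 1) = (-1:ℝ)^(uv.1+uv.2+1) := by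
        apply neg_one_pow_congr'
        have h1 := hpar_uh uv.1
        have h2 := hpar_vk uv.2
        omega
      simp only
      rw [harg, hsgn]
    · rw [if_neg hcase]
      push_neg at hcase
      have hlt2 : uv.1 * h + uv.2 * k - h * k < h * k := by omega
      have hmod : (uv.1 * h + uv.2 * k) % (h * k) = uv.1 * h + uv.2 * k - h * k := by
        rw [Nat.mod_eq_sub_mod hcase, Nat.mod_eq_of_lt hlt2]
      rw [hmod, hg]
      have harg : ((uv.1 * h + uv.2 * k - h * k : ℕ):ℝ)/((h:ℝ)*k)
          = (uv.1:ℝ)/k + (uv.2:ℝ)/h - 1 := by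
        rw [Nat.cast_sub hcase, hxval]
        push_cast
        field_simp
      have hsgn : (-1:ℝ)^(uv.1 * h + uv.2 * k - h * k + 1) = (-1:ℝ)^(uv.1+uv.2) := by
        apply neg_one_pow_congr'
        have h1 := hpar_uh uv.1
        have h2 := hpar_vk uv.2
        omega
      simp only
      rw [harg, hsgn]
  -- Lemma B restated
  have hSB : ((h:ℝ) * k) ^ p *
      (∑ uv ∈ G, (-1:ℝ)^(uv.1+uv.2) * eulerFun p ((uv.1:ℝ)/k + (uv.2:ℝ)/h))
      = (eulerNumber p : ℝ) := by
    rw [hG, sum_G_eulerFun p h k hh hk hhodd hkodd hcop, mul_pow]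
    field_simp
  -- filter sum restated
  have hS4 : ∑ uv ∈ (Finset.range k ×ˢ Finset.range h).filter
        (fun uv => uv.1 * h + uv.2 * k < h * k),
        (-1 : ℝ) ^ (uv.1 + uv.2 + 1) * eulerPoly p ((uv.1 : ℝ) / k + (uv.2 : ℝ) / h)
      = ∑ uv ∈ G, (if uv.1 * h + uv.2 * k < h * k then
          (-1 : ℝ) ^ (uv.1 + uv.2 + 1) * eulerPoly p ((uv.1 : ℝ) / k + (uv.2 : ℝ) / h) else 0) := by
    rw [hG, Finset.sum_filter]
  -- pointwise key identity
  have hkey : ∀ uv ∈ G, (-1:ℝ) ^ (uv.1 + uv.2 + 1) *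
        ((uv.1 : ℝ)/k + (uv.2 : ℝ)/h) * eulerFun p ((uv.1 : ℝ)/k + (uv.2 : ℝ)/h)
      = (if uv.1 * h + uv.2 * k < h * k then
          (-1:ℝ)^(uv.1+uv.2+1) * ((uv.1:ℝ)/k + (uv.2:ℝ)/h) * eulerPoly p ((uv.1:ℝ)/k + (uv.2:ℝ)/h)
        else
          (-1:ℝ)^(uv.1+uv.2) * ((uv.1:ℝ)/k + (uv.2:ℝ)/h - 1) * eulerPoly p ((uv.1:ℝ)/k + (uv.2:ℝ)/h - 1))
        - (-1:ℝ)^(uv.1+uv.2) * eulerFun p ((uv.1:ℝ)/k + (uv.2:ℝ)/h)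
        - (if uv.1 * h + uv.2 * k < h * k then
            (-1 : ℝ) ^ (uv.1 + uv.2 + 1) * eulerPoly p ((uv.1 : ℝ) / k + (uv.2 : ℝ) / h) else 0) := by
    intro uv huv
    rw [hG, Finset.mem_product, mem_range, mem_range] at huv
    obtain ⟨hu, hv⟩ := huv
    have hxval : (uv.1:ℝ)/k + (uv.2:ℝ)/h = ((uv.1:ℝ)*h + (uv.2:ℝ)*k)/((h:ℝ)*k) := by
      rw [div_add_div _ _ (ne_of_gt hkR) (ne_of_gt hhR),
        div_eq_div_iff (by positivity) (by positivity)]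
      ring
    have hx0 : (0:ℝ) ≤ (uv.1:ℝ)/k + (uv.2:ℝ)/h := by positivity
    by_cases hcase : uv.1 * h + uv.2 * k < h * k
    · rw [if_pos hcase, if_pos hcase]
      have hx1 : (uv.1:ℝ)/k + (uv.2:ℝ)/h < 1 := by
        rw [hxval, div_lt_one hhkR]
        have : ((uv.1 * h + uv.2 * k : ℕ):ℝ) < ((h*k : ℕ):ℝ) := by exact_mod_cast hcase
        push_cast at this
        linarith
      rw [eulerFun_of_Ico p _ hx0 hx1, pow_succ]
      ring
    · rw [if_neg hcase, if_neg hcase]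
      push_neg at hcase
      have hxge : (1:ℝ) ≤ (uv.1:ℝ)/k + (uv.2:ℝ)/h := by
        rw [hxval, le_div_iff₀ hhkR, one_mul]
        have : ((h*k : ℕ):ℝ) ≤ ((uv.1 * h + uv.2 * k : ℕ):ℝ) := by exact_mod_cast hcase
        push_cast at this
        linarith
      have hxlt : (uv.1:ℝ)/k + (uv.2:ℝ)/h - 1 < 1 := by
        have h1 : (uv.1:ℝ)/k < 1 := by
          rw [div_lt_one hkR]; exact_mod_cast hu
        have h2 : (uv.2:ℝ)/h < 1 := by
          rw [div_lt_one hhR]; exact_mod_cast hv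
        linarith
      have hEF : eulerFun p ((uv.1:ℝ)/k + (uv.2:ℝ)/h)
          = -eulerPoly p ((uv.1:ℝ)/k + (uv.2:ℝ)/h - 1) := by
        have := eulerFun_add_one p ((uv.1:ℝ)/k + (uv.2:ℝ)/h - 1)
        rw [sub_add_cancel] at this
        rw [this, eulerFun_of_Ico p _ (by linarith) hxlt]
      rw [hEF, pow_succ]
      ring
  -- final assembly
  rw [stepC, stepD0, hS4]
  have hsplit : ∑ uv ∈ G, (-1:ℝ) ^ (uv.1 + uv.2 + 1) *
        ((uv.1 : ℝ)/k + (uv.2 : ℝ)/h) * eulerFun p ((uv.1 : ℝ)/k + (uv.2 : ℝ)/h)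
      = (∑ uv ∈ G, g ((uv.1 * h + uv.2 * k) % (h * k)))
        - (∑ uv ∈ G, (-1:ℝ)^(uv.1+uv.2) * eulerFun p ((uv.1:ℝ)/k + (uv.2:ℝ)/h))
        - (∑ uv ∈ G, (if uv.1 * h + uv.2 * k < h * k then
            (-1 : ℝ) ^ (uv.1 + uv.2 + 1) * eulerPoly p ((uv.1 : ℝ) / k + (uv.2 : ℝ) / h) else 0)) := by
    rw [← Finset.sum_sub_distrib, ← Finset.sum_sub_distrib]
    apply Finset.sum_congr rfl
    intro uv huv
    rw [hkey uv huv, hgphi uv huv]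
  rw [hsplit]
  linear_combination (-2 : ℝ) * hSB
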